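/- Let F be a D-free triple system on n vertices. If n ≡ 1 (mod 3) then |F| ≤ n(n−1)/3, and if n ≢ 1 (mod 3) then |F| ≤ n(n−2)/3. -/

import Mathlib

/-- A triple system: a family of 3-element subsets of the vertex type. -/
def isTripleSystem {V : Type*} (F : Finset (Finset V)) : Prop :=
  ∀ t ∈ F, t.card = 3

/-- `F` contains the configuration described by `pattern` (a list of triples on `Fin m`)
if there is an injection of `Fin m` into the vertex set mapping each triple of the
pattern to a member of `F`. -/
def containsConfig {V : Type*} [DecidableEq V] {m : ℕ}
    (F : Finset (Finset V)) (pattern : List (Finset (Fin m))) : Prop :=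
  ∃ f : Fin m → V, Function.Injective f ∧ ∀ t ∈ pattern, t.image f ∈ F

/-- Configuration A: triples {1,2,4},{1,3,5},{2,3,6} on 6 vertices (0-indexed). -/
def configA : List (Finset (Fin 6)) := [{0,1,3}, {0,2,4}, {1,2,5}]

/-- Configuration B: triples {1,2,5},{1,3,4},{2,3,4} on 5 vertices (0-indexed). -/
def configB : List (Finset (Fin 5)) := [{0,1,4}, {0,2,3}, {1,2,3}]

/-- Configuration C: triples {1,2,4},{1,3,4},{2,3,4} on 4 vertices (0-indexed). -/
def configC : List (Finset (Fin 4)) := [{0,1,3}, {0,2,3}, {1,2,3}]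

/-- Configuration D: triples {1,2,3},{1,3,4},{2,3,5} on 5 vertices (0-indexed). -/
def configD : List (Finset (Fin 5)) := [{0,1,2}, {0,2,3}, {1,2,4}]


namespace DfreeAux

variable {V : Type*} [DecidableEq V]

def fbound (m : ℕ) : ℕ := if m % 3 = 0 then m else m - 1

lemma fbound_le (m : ℕ) : fbound m ≤ m := by unfold fbound; split <;> omega
lemma le_fbound (m : ℕ) : m - 1 ≤ fbound m := by unfold fbound; split <;> omega

def P4free (E : Finset (Finset V)) : Prop :=
  ∀ a b c d : V, a ≠ b → a ≠ c → a ≠ d → b ≠ c → b ≠ d → c ≠ d →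
    ({a,b} : Finset V) ∈ E → ({a,c} : Finset V) ∈ E → ({b,d} : Finset V) ∈ E → False

lemma edge_eq {E : Finset (Finset V)} (hE2 : ∀ e ∈ E, e.card = 2)
    {e : Finset V} (he : e ∈ E) {a : V} (ha : a ∈ e) :
    ∃ x, x ≠ a ∧ e = {a, x} := by
  have h2 := hE2 e he
  have h1 : (e.erase a).card = 1 := by rw [Finset.card_erase_of_mem ha, h2]
  obtain ⟨x, hx⟩ := Finset.card_eq_one.mp h1
  refine ⟨x, ?_, ?_⟩
  · have : x ∈ e.erase a := hx ▸ Finset.mem_singleton_self x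
    exact (Finset.mem_erase.mp this).1
  · rw [← Finset.insert_erase ha, hx]

lemma ne_of_pair {E : Finset (Finset V)} (hE2 : ∀ e ∈ E, e.card = 2)
    {a x : V} (h : ({a,x} : Finset V) ∈ E) : x ≠ a := by
  intro hxa; subst hxa
  have := hE2 _ h
  simp at this

lemma star_case (S : Finset V) (E : Finset (Finset V))
    (hE2 : ∀ e ∈ E, e.card = 2) (hES : ∀ e ∈ E, e ⊆ S) (hP : P4free E)
    (a b : V) (hab : a ≠ b) (habE : ({a,b} : Finset V) ∈ E)
    (hNb : ∀ x, ({b,x} : Finset V) ∈ E → x = a)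
    (ih : ∀ (S' : Finset V) (E' : Finset (Finset V)), S'.card + 1 ≤ S.card →
      (∀ e ∈ E', e.card = 2) → (∀ e ∈ E', e ⊆ S') → P4free E' →
      E'.card ≤ fbound S'.card) :
    E.card ≤ fbound S.card := by
  classical
  set Na : Finset V := S.filter (fun x => ({a,x} : Finset V) ∈ E) with hNadef
  have haS : a ∈ S := (hES _ habE) (by simp)
  have hbNa : b ∈ Na := by
    simp only [hNadef, Finset.mem_filter]
    exact ⟨(hES _ habE) (by simp), habE⟩
  have haNa : a ∉ Na := by
    simp only [hNadef, Finset.mem_filter]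
    rintro ⟨-, h⟩
    exact ne_of_pair hE2 h rfl
  -- every neighbour of a member of Na is a
  have hNc : ∀ c ∈ Na, ∀ x, ({c,x} : Finset V) ∈ E → x = a := by
    intro c hc x hx
    have hcE : ({a,c} : Finset V) ∈ E := (Finset.mem_filter.mp hc).2
    have hca : c ≠ a := ne_of_pair hE2 hcE
    by_contra hxa
    by_cases hcb : c = b
    · exact hxa (hNb x (hcb ▸ hx))
    · have hxc : x ≠ c := ne_of_pair hE2 hx
      have hxb : x ≠ b := by
        intro h; subst h
        exact hca (hNb c (by rwa [Finset.pair_comm] at hx))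
      exact hP a c b x hca.symm hab (Ne.symm hxa) hcb hxc.symm hxb.symm
        hcE habE hx
  set R : Finset V := insert a Na with hRdef
  have hRS : R ⊆ S := by
    intro x hx
    rcases Finset.mem_insert.mp hx with h | h
    · exact h ▸ haS
    · exact (Finset.mem_filter.mp h).1
  have hRcard : R.card = Na.card + 1 := Finset.card_insert_of_notMem haNa
  set E' : Finset (Finset V) := E.filter (fun e => e ∩ R = ∅) with hE'def
  set Estar : Finset (Finset V) := Na.image (fun x => ({a,x} : Finset V)) with hEstardef
  have hEsub : E ⊆ Estar ∪ E' := by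
    intro e he
    by_cases hdis : e ∩ R = ∅
    · exact Finset.mem_union_right _ (Finset.mem_filter.mpr ⟨he, hdis⟩)
    · obtain ⟨x, hx⟩ := Finset.nonempty_iff_ne_empty.mpr hdis
      obtain ⟨hxe, hxR⟩ := Finset.mem_inter.mp hx
      apply Finset.mem_union_left
      rcases Finset.mem_insert.mp hxR with h | h
      · rw [h] at hxe
        obtain ⟨y, hya, hey⟩ := edge_eq hE2 he hxe
        have hyE : ({a,y} : Finset V) ∈ E := by rwa [hey] at he
        have hyS : y ∈ S := (hES _ hyE) (by simp)
        exact Finset.mem_image.mpr ⟨y, Finset.mem_filter.mpr ⟨hyS, hyE⟩, hey.symm⟩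
      · obtain ⟨y, hyx, hey⟩ := edge_eq hE2 he hxe
        have hyE : ({x,y} : Finset V) ∈ E := by rwa [hey] at he
        have hya : y = a := hNc x h y hyE
        subst hya
        refine Finset.mem_image.mpr ⟨x, h, ?_⟩
        rw [hey, Finset.pair_comm]
  have hcard1 : E.card ≤ Na.card + E'.card := by
    calc E.card ≤ (Estar ∪ E').card := Finset.card_le_card hEsub
      _ ≤ Estar.card + E'.card := Finset.card_union_le _ _
      _ ≤ Na.card + E'.card := by
          exact Nat.add_le_add_right (Finset.card_image_le) _
  have hE'S : ∀ e ∈ E', e ⊆ S \ R := by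
    intro e he x hxe
    obtain ⟨heE, hdis⟩ := Finset.mem_filter.mp he
    refine Finset.mem_sdiff.mpr ⟨(hES _ heE) hxe, fun hxR => ?_⟩
    have hmem : x ∈ e ∩ R := Finset.mem_inter.mpr ⟨hxe, hxR⟩
    rw [hdis] at hmem
    exact Finset.notMem_empty x hmem
  have hE'2 : ∀ e ∈ E', e.card = 2 := fun e he => hE2 e (Finset.mem_filter.mp he).1
  have hE'P : P4free E' := by
    intro a' b' c' d' h1 h2 h3 h4 h5 h6 m1 m2 m3
    exact hP a' b' c' d' h1 h2 h3 h4 h5 h6 (Finset.mem_filter.mp m1).1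
      (Finset.mem_filter.mp m2).1 (Finset.mem_filter.mp m3).1
  have hSR : (S \ R).card = S.card - (Na.card + 1) := by
    rw [Finset.card_sdiff_of_subset hRS, hRcard]
  have hkS : Na.card + 1 ≤ S.card := hRcard ▸ Finset.card_le_card hRS
  have hk1 : 1 ≤ Na.card := Finset.card_pos.mpr ⟨b, hbNa⟩
  have hdec : (S \ R).card + 1 ≤ S.card := by omega
  have hIH := ih (S \ R) E' hdec hE'2 hE'S hE'P
  have h1 := fbound_le (S \ R).card
  have h2 := le_fbound S.card
  omega

lemma graph_bound : ∀ (m : ℕ) (S : Finset V) (E : Finset (Finset V)),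
    S.card ≤ m → (∀ e ∈ E, e.card = 2) → (∀ e ∈ E, e ⊆ S) → P4free E →
    E.card ≤ fbound S.card := by
  intro m
  induction m with
  | zero =>
    intro S E hS hE2 hES hP
    have hSe : S = ∅ := Finset.card_eq_zero.mp (Nat.le_zero.mp hS)
    have hEe : E = ∅ := by
      rw [Finset.eq_empty_iff_forall_notMem]
      intro e he
      have h2 := hE2 e he
      have : e ⊆ (∅ : Finset V) := hSe ▸ hES e he
      rw [Finset.subset_empty] at this
      simp [this] at h2
    simp [hEe]
  | succ m ih =>
    intro S E hS hE2 hES hP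
    rcases E.eq_empty_or_nonempty with hE | ⟨t, ht⟩
    · simp [hE]
    have ih' : ∀ (S' : Finset V) (E' : Finset (Finset V)), S'.card + 1 ≤ S.card →
        (∀ e ∈ E', e.card = 2) → (∀ e ∈ E', e ⊆ S') → P4free E' →
        E'.card ≤ fbound S'.card := by
      intro S' E' hlt
      exact ih S' E' (by omega)
    -- t = {a, b}
    obtain ⟨a, b, hab, htab⟩ := Finset.card_eq_two.mp (hE2 t ht)
    subst htab
    by_cases hB : ∀ x, ({b,x} : Finset V) ∈ E → x = a
    · exact star_case S E hE2 hES hP a b hab ht hB ih'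
    by_cases hA : ∀ x, ({a,x} : Finset V) ∈ E → x = b
    · exact star_case S E hE2 hES hP b a hab.symm (by rwa [Finset.pair_comm]) hA ih'
    push_neg at hA hB
    obtain ⟨c, hacE, hcb⟩ := hA
    obtain ⟨d, hbdE, hda⟩ := hB
    have hca : c ≠ a := ne_of_pair hE2 hacE
    have hdb : d ≠ b := ne_of_pair hE2 hbdE
    -- c must equal d
    have hcd : c = d := by
      by_contra hcd
      exact hP a b c d hab hca.symm (Ne.symm hda) (Ne.symm hcb) hdb.symm hcd
        ht hacE hbdE
    subst hcd
    have hbcE : ({b,c} : Finset V) ∈ E := hbdE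
    clear hbdE hdb hda
    have hcb' : c ≠ b := hcb
    -- neighbourhood computations
    have hNa : ∀ x, ({a,x} : Finset V) ∈ E → x = b ∨ x = c := by
      intro x hx
      by_contra h
      push_neg at h
      obtain ⟨hxb, hxc⟩ := h
      have hxa : x ≠ a := ne_of_pair hE2 hx
      exact hP a b x c hab hxa.symm hca.symm hxb.symm hcb.symm hxc
        ht hx hbcE
    have hNb : ∀ x, ({b,x} : Finset V) ∈ E → x = a ∨ x = c := by
      intro x hx
      by_contra h
      push_neg at h
      obtain ⟨hxa, hxc⟩ := h
      have hxb : x ≠ b := ne_of_pair hE2 hx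
      exact hP b a x c hab.symm hxb.symm hcb.symm hxa.symm hca.symm hxc
        (by rwa [Finset.pair_comm] at ht) hx hacE
    have hNc : ∀ x, ({c,x} : Finset V) ∈ E → x = a ∨ x = b := by
      intro x hx
      by_contra h
      push_neg at h
      obtain ⟨hxa, hxb⟩ := h
      have hxc : x ≠ c := ne_of_pair hE2 hx
      exact hP c a x b hca hxc.symm hcb hxa.symm hab hxb
        (by rwa [Finset.pair_comm] at hacE) hx ht
    set R : Finset V := {a, b, c} with hRdef
    have hRS : R ⊆ S := by
      intro x hx
      simp only [hRdef, Finset.mem_insert, Finset.mem_singleton] at hx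
      rcases hx with h | h | h
      · exact h ▸ (hES _ ht) (by simp)
      · exact h ▸ (hES _ ht) (by simp)
      · exact h ▸ (hES _ hacE) (by simp)
    have hRcard : R.card = 3 := by
      rw [hRdef, Finset.card_insert_of_notMem (by simp [hab, hca.symm]),
        Finset.card_insert_of_notMem (by simp [hcb'.symm])]
      rfl
    set E' : Finset (Finset V) := E.filter (fun e => e ∩ R = ∅) with hE'def
    have hEsub : E ⊆ insert {a,b} (insert {a,c} (insert {b,c} E')) := by
      intro e he
      by_cases hdis : e ∩ R = ∅
      · simp only [Finset.mem_insert]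
        exact Or.inr (Or.inr (Or.inr (Finset.mem_filter.mpr ⟨he, hdis⟩)))
      obtain ⟨x, hx⟩ := Finset.nonempty_iff_ne_empty.mpr hdis
      obtain ⟨hxe, hxR⟩ := Finset.mem_inter.mp hx
      simp only [hRdef, Finset.mem_insert, Finset.mem_singleton] at hxR
      simp only [Finset.mem_insert]
      rcases hxR with h | h | h
      · rw [h] at hxe
        obtain ⟨y, hya, hey⟩ := edge_eq hE2 he hxe
        have hyE : ({a,y} : Finset V) ∈ E := by rwa [hey] at he
        rcases hNa y hyE with h' | h' <;> subst h'
        · exact Or.inl hey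
        · exact Or.inr (Or.inl hey)
      · rw [h] at hxe
        obtain ⟨y, hya, hey⟩ := edge_eq hE2 he hxe
        have hyE : ({b,y} : Finset V) ∈ E := by rwa [hey] at he
        rcases hNb y hyE with h' | h' <;> subst h'
        · exact Or.inl (by rw [hey, Finset.pair_comm])
        · exact Or.inr (Or.inr (Or.inl hey))
      · rw [h] at hxe
        obtain ⟨y, hya, hey⟩ := edge_eq hE2 he hxe
        have hyE : ({c,y} : Finset V) ∈ E := by rwa [hey] at he
        rcases hNc y hyE with h' | h' <;> subst h'
        · exact Or.inr (Or.inl (by rw [hey, Finset.pair_comm]))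
        · exact Or.inr (Or.inr (Or.inl (by rw [hey, Finset.pair_comm])))
    have hcard1 : E.card ≤ E'.card + 3 := by
      calc E.card ≤ (insert {a,b} (insert {a,c} (insert ({b,c} : Finset V) E'))).card :=
            Finset.card_le_card hEsub
        _ ≤ (insert {a,c} (insert ({b,c} : Finset V) E')).card + 1 := Finset.card_insert_le _ _
        _ ≤ (insert ({b,c} : Finset V) E').card + 1 + 1 :=
            Nat.add_le_add_right (Finset.card_insert_le _ _) _
        _ ≤ E'.card + 1 + 1 + 1 :=
            Nat.add_le_add_right (Nat.add_le_add_right (Finset.card_insert_le _ _) _) _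
        _ = E'.card + 3 := by omega
    have hE'S : ∀ e ∈ E', e ⊆ S \ R := by
      intro e he x hxe
      obtain ⟨heE, hdis⟩ := Finset.mem_filter.mp he
      refine Finset.mem_sdiff.mpr ⟨(hES _ heE) hxe, fun hxR => ?_⟩
      have hmem : x ∈ e ∩ R := Finset.mem_inter.mpr ⟨hxe, hxR⟩
      rw [hdis] at hmem
      exact Finset.notMem_empty x hmem
    have hE'2 : ∀ e ∈ E', e.card = 2 := fun e he => hE2 e (Finset.mem_filter.mp he).1
    have hE'P : P4free E' := by
      intro a' b' c' d' h1 h2 h3 h4 h5 h6 m1 m2 m3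
      exact hP a' b' c' d' h1 h2 h3 h4 h5 h6 (Finset.mem_filter.mp m1).1
        (Finset.mem_filter.mp m2).1 (Finset.mem_filter.mp m3).1
    have hSR : (S \ R).card = S.card - 3 := by
      rw [Finset.card_sdiff_of_subset hRS, hRcard]
    have h3S : 3 ≤ S.card := hRcard ▸ Finset.card_le_card hRS
    have hIH := ih' (S \ R) E' (by omega) hE'2 hE'S hE'P
    rw [hSR] at hIH
    have harith : fbound (S.card - 3) + 3 ≤ fbound S.card := by
      unfold fbound
      split_ifs <;> omega
    omega

end DfreeAux

open DfreeAux

/-- Upper bounds on the size of a D-free triple system on n vertices. -/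
theorem Dfree_upper (n : ℕ) (F : Finset (Finset (Fin n))) (hF : isTripleSystem F)
    (hD : ¬ containsConfig F configD) :
    (n % 3 = 1 → F.card ≤ n * (n - 1) / 3) ∧
    (n % 3 ≠ 1 → F.card ≤ n * (n - 2) / 3) := by
  classical
  -- per-vertex degree bound via link graph
  have hdeg : ∀ v : Fin n, (F.filter (fun t => v ∈ t)).card ≤ fbound (n - 1) := by
    intro v
    set Fv := F.filter (fun t => v ∈ t) with hFvdef
    set Ev : Finset (Finset (Fin n)) := Fv.image (fun t => t.erase v) with hEvdef
    have hmemFv : ∀ t ∈ Fv, t ∈ F ∧ v ∈ t := fun t ht => Finset.mem_filter.mp ht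
    have hcardEv : Ev.card = Fv.card := by
      apply Finset.card_image_of_injOn
      intro t1 h1 t2 h2 h12
      have hv1 := (hmemFv t1 h1).2
      have hv2 := (hmemFv t2 h2).2
      rw [← Finset.insert_erase hv1, ← Finset.insert_erase hv2]
      exact congrArg (insert v) h12
    set S : Finset (Fin n) := Finset.univ.erase v with hSdef
    have hScard : S.card = n - 1 := by
      rw [hSdef, Finset.card_erase_of_mem (Finset.mem_univ v), Finset.card_univ,
        Fintype.card_fin]
    have hE2 : ∀ e ∈ Ev, e.card = 2 := by
      intro e he
      obtain ⟨t, ht, rfl⟩ := Finset.mem_image.mp he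
      obtain ⟨htF, hvt⟩ := hmemFv t ht
      rw [Finset.card_erase_of_mem hvt, hF t htF]
    have hES : ∀ e ∈ Ev, e ⊆ S := by
      intro e he x hx
      obtain ⟨t, ht, rfl⟩ := Finset.mem_image.mp he
      exact Finset.mem_erase.mpr ⟨(Finset.mem_erase.mp hx).1, Finset.mem_univ x⟩
    -- membership in Ev gives a triple in F
    have hEvF : ∀ e ∈ Ev, insert v e ∈ F := by
      intro e he
      obtain ⟨t, ht, rfl⟩ := Finset.mem_image.mp he
      obtain ⟨htF, hvt⟩ := hmemFv t ht
      rwa [Finset.insert_erase hvt]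
    have hEvne : ∀ e ∈ Ev, v ∉ e := by
      intro e he hv
      exact absurd ((hES e he) hv) (by simp [hSdef])
    have hP : P4free Ev := by
      intro a b c d hab hac had hbc hbd hcd m1 m2 m3
      apply hD
      have hva : a ≠ v := by
        have := (hES _ m1) (show a ∈ ({a,b} : Finset (Fin n)) by simp)
        exact (Finset.mem_erase.mp this).1
      have hvb : b ≠ v := by
        have := (hES _ m1) (show b ∈ ({a,b} : Finset (Fin n)) by simp)
        exact (Finset.mem_erase.mp this).1
      have hvc : c ≠ v := by
        have := (hES _ m2) (show c ∈ ({a,c} : Finset (Fin n)) by simp)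
        exact (Finset.mem_erase.mp this).1
      have hvd : d ≠ v := by
        have := (hES _ m3) (show d ∈ ({b,d} : Finset (Fin n)) by simp)
        exact (Finset.mem_erase.mp this).1
      refine ⟨![a, b, v, c, d], ?_, ?_⟩
      · intro i j hij
        fin_cases i <;> fin_cases j <;>
          simp at hij ⊢ <;> first | rfl | (exfalso; (first
            | exact hab hij | exact hac hij | exact had hij | exact hbc hij
            | exact hbd hij | exact hcd hij | exact hva hij | exact hvb hij
            | exact hvc hij | exact hvd hij | exact hab hij.symm
            | exact hac hij.symm | exact had hij.symm | exact hbc hij.symm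
            | exact hbd hij.symm | exact hcd hij.symm | exact hva hij.symm
            | exact hvb hij.symm | exact hvc hij.symm | exact hvd hij.symm))
      · intro t htmem
        have h1 := hEvF _ m1
        have h2 := hEvF _ m2
        have h3 := hEvF _ m3
        simp only [configD, List.mem_cons, List.mem_singleton, List.not_mem_nil,
          or_false] at htmem
        rcases htmem with rfl | rfl | rfl
        · convert h1 using 1
          ext x
          simp
          tauto
        · convert h2 using 1
          ext x
          simp
          tauto
        · convert h3 using 1
          ext x
          simp
          tauto
    have := graph_bound (n - 1) S Ev (le_of_eq hScard) hE2 hES hP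
    rw [hScard] at this
    omega
  -- double counting
  have hsum : ∑ v : Fin n, (F.filter (fun t => v ∈ t)).card = 3 * F.card := by
    have h1 : ∀ v : Fin n, (F.filter (fun t => v ∈ t)).card
        = ∑ t ∈ F, if v ∈ t then 1 else 0 := fun v => Finset.card_filter _ _
    calc ∑ v : Fin n, (F.filter (fun t => v ∈ t)).card
        = ∑ v : Fin n, ∑ t ∈ F, if v ∈ t then 1 else 0 := by
          exact Finset.sum_congr rfl fun v _ => h1 v
      _ = ∑ t ∈ F, ∑ v : Fin n, if v ∈ t then 1 else 0 := Finset.sum_comm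
      _ = ∑ t ∈ F, t.card := by
          refine Finset.sum_congr rfl fun t _ => ?_
          rw [← Finset.card_filter, Finset.filter_mem_eq_inter, Finset.univ_inter]
      _ = ∑ t ∈ F, 3 := Finset.sum_congr rfl fun t ht => hF t ht
      _ = 3 * F.card := by rw [Finset.sum_const, smul_eq_mul, mul_comm]
  have key : 3 * F.card ≤ n * fbound (n - 1) := by
    calc 3 * F.card = ∑ v : Fin n, (F.filter (fun t => v ∈ t)).card := hsum.symm
      _ ≤ ∑ _v : Fin n, fbound (n - 1) := Finset.sum_le_sum fun v _ => hdeg v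
      _ = n * fbound (n - 1) := by
          rw [Finset.sum_const, Finset.card_univ, Fintype.card_fin, smul_eq_mul]
  constructor
  · intro h1
    have hfb : fbound (n - 1) = n - 1 := by unfold fbound; split <;> omega
    rw [hfb] at key
    rw [Nat.le_div_iff_mul_le (by norm_num : 0 < 3)]
    omega
  · intro h1
    have hfb : fbound (n - 1) ≤ n - 2 := by unfold fbound; split <;> omega
    have : 3 * F.card ≤ n * (n - 2) :=
      le_trans key (Nat.mul_le_mul_left n hfb)
    rw [Nat.le_div_iff_mul_le (by norm_num : 0 < 3)]
    omega
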